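/- Let q be a prime power, A an invertible 2×2 matrix over F_q with entries a, b, c, d, and f a monic irreducible polynomial over F_q of degree k ≥ 2. Then the polynomial (cx+d)^k · f((ax+b)/(cx+d)), after normalization to a monic polynomial, is again a monic irreducible polynomial of degree k over F_q. -/

import Mathlib

open Polynomial IntermediateField

/-- The Möbius substitution `A ∘ f (x) = (cx+d)^(deg f) f((ax+b)/(cx+d))` as a polynomial. -/
noncomputable def mobius {F : Type*} [Field F] (A : Matrix (Fin 2) (Fin 2) F) (f : F[X]) : F[X] :=
  ∑ i ∈ Finset.range (f.natDegree + 1),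
    C (f.coeff i) * (C (A 0 0) * X + C (A 0 1)) ^ i *
      (C (A 1 0) * X + C (A 1 1)) ^ (f.natDegree - i)

/-- The monic normalization `[A] ∘ f`. -/
noncomputable def mobiusN {F : Type*} [Field F] (A : Matrix (Fin 2) (Fin 2) F) (f : F[X]) : F[X] :=
  mobius A f * C (mobius A f).leadingCoeff⁻¹

/-- An irreducible polynomial of degree at least 2 has no roots. -/
lemma aux_no_root {F : Type*} [Field F] {f : F[X]} (hirr : Irreducible f)
    (h2 : 2 ≤ f.natDegree) (r : F) : f.eval r ≠ 0 := by
  intro h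
  have hdvd : (X - C r) ∣ f := dvd_iff_isRoot.mpr h
  obtain ⟨g, hg⟩ := hdvd
  rcases hirr.isUnit_or_isUnit hg with hu | hu
  · exact not_isUnit_X_sub_C r hu
  · have hg0 : g.natDegree = 0 := natDegree_eq_zero_of_isUnit hu
    have hX : (X - C r).natDegree = 1 := natDegree_X_sub_C r
    have hXne : (X - C r) ≠ 0 := X_sub_C_ne_zero r
    have hgne : g ≠ 0 := hu.ne_zero
    have : f.natDegree = 1 := by
      rw [hg, natDegree_mul hXne hgne, hX, hg0]
    omega

theorem stmt0 {F : Type*} [Field F] [Fintype F]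
    (A : Matrix (Fin 2) (Fin 2) F) (hA : A.det ≠ 0)
    (f : F[X]) (hmon : f.Monic) (hirr : Irreducible f)
    (k : ℕ) (hk : 2 ≤ k) (hdeg : f.natDegree = k) :
    (mobiusN A f).Monic ∧ Irreducible (mobiusN A f) ∧ (mobiusN A f).natDegree = k := by
  classical
  subst hdeg
  set n := f.natDegree with hn
  set a := A 0 0 with ha
  set b := A 0 1 with hb
  set c := A 1 0 with hc
  set d := A 1 1 with hd
  have hdet : a * d - b * c ≠ 0 := by
    rw [Matrix.det_fin_two] at hA
    exact hA
  have hf0 : f ≠ 0 := hmon.ne_zero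
  have hnoroot : ∀ r : F, f.eval r ≠ 0 := aux_no_root hirr hk
  -- mobius A f ≠ 0
  have hmobne : mobius A f ≠ 0 := by
    set x0 : F := if c = 0 then 0 else (1 - d) / c with hx0
    set t : F := c * x0 + d with ht
    have htne : t ≠ 0 := by
      rw [ht, hx0]
      by_cases hcz : c = 0
      · simp [hcz]
        intro hdz
        apply hdet; rw [hcz, hdz]; ring
      · rw [if_neg hcz, mul_div_cancel₀ _ hcz]; simp
    set s : F := a * x0 + b with hs
    intro hzero
    have heval : (mobius A f).eval x0 = t ^ n * f.eval (s / t) := by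
      rw [mobius, eval_finset_sum]
      have : f.eval (s / t) = ∑ i ∈ Finset.range (n + 1), f.coeff i * (s / t) ^ i := by
        rw [eval, eval₂_eq_sum_range]; simp; rfl
      rw [this, Finset.mul_sum]
      apply Finset.sum_congr rfl
      intro i hi
      have hin : i ≤ n := by
        simp only [Finset.mem_range] at hi; omega
      simp only [eval_mul, eval_pow, eval_add, eval_C, eval_X]
      rw [div_pow, pow_sub₀ t htne hin]
      field_simp
      ring
    rw [hzero] at heval
    simp only [eval_zero] at heval
    exact mul_ne_zero (pow_ne_zero n htne) (hnoroot (s / t)) heval.symm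
  -- degree bound
  have hmobdeg : (mobius A f).natDegree ≤ n := by
    rw [mobius]
    apply Polynomial.natDegree_sum_le_of_forall_le
    intro i hi
    have hin : i ≤ n := by simp only [Finset.mem_range] at hi; omega
    calc (C (f.coeff i) * (C a * X + C b) ^ i * (C c * X + C d) ^ (n - i)).natDegree
        ≤ (C (f.coeff i) * (C a * X + C b) ^ i).natDegree + ((C c * X + C d) ^ (n - i)).natDegree :=
          natDegree_mul_le
      _ ≤ ((C (f.coeff i)).natDegree + ((C a * X + C b) ^ i).natDegree) + ((C c * X + C d) ^ (n - i)).natDegree := by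
          exact Nat.add_le_add_right natDegree_mul_le _
      _ ≤ (0 + i * 1) + (n - i) * 1 := by
          apply add_le_add
          apply add_le_add
          · exact le_of_eq (natDegree_C _)
          · exact natDegree_pow_le.trans (Nat.mul_le_mul_left i natDegree_linear_le)
          · exact natDegree_pow_le.trans (Nat.mul_le_mul_left (n - i) natDegree_linear_le)
      _ ≤ n := by omega
  -- the field extension
  haveI : Fact (Irreducible f) := ⟨hirr⟩
  set K := AdjoinRoot f with hK
  set α : K := AdjoinRoot.root f with hα
  set φ : F →+* K := algebraMap F K with hφ
  have hφinj : Function.Injective φ := φ.injective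
  have hroot : aeval α f = 0 := by
    rw [aeval_def, AdjoinRoot.algebraMap_eq]
    exact AdjoinRoot.eval₂_root f
  haveI : FiniteDimensional F K := PowerBasis.finite (AdjoinRoot.powerBasis hf0)
  have hfinrank : Module.finrank F K = n := by
    rw [PowerBasis.finrank (AdjoinRoot.powerBasis hf0), AdjoinRoot.powerBasis_dim hf0]
  have hαnot : ∀ r : F, α ≠ φ r := by
    intro r hr
    have : aeval (φ r) f = 0 := hr ▸ hroot
    rw [hφ, aeval_algebraMap_apply] at this
    have h0 : aeval r f = 0 := by
      apply hφinj
      rw [map_zero]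
      exact this
    exact hnoroot r (by simpa using h0)
  set u : K := φ a - φ c * α with hu
  have hune : u ≠ 0 := by
    by_cases hcz : c = 0
    · have hane : a ≠ 0 := by
        intro haz; apply hdet; rw [hcz, haz]; ring
      rw [hu, hcz]
      simp only [map_zero, zero_mul, sub_zero]
      exact fun h => hane (hφinj (by simpa using h))
    · intro h0
      apply hαnot (a / c)
      have : φ a = φ c * α := by
        have := sub_eq_zero.mp (hu ▸ h0)
        linear_combination this
      have hφc : φ c ≠ 0 := fun h => hcz (hφinj (by simpa using h))
      rw [map_div₀, eq_div_iff hφc]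
      rw [mul_comm] at this
      exact this.symm
  set β : K := (φ d * α - φ b) * u⁻¹ with hβ
  have h1 : u * β = φ d * α - φ b := by
    rw [hβ]
    rw [mul_comm, mul_assoc, inv_mul_cancel₀ hune, mul_one]
  have h2 : u * (φ a * β + φ b) = φ (a * d - b * c) * α := by
    have : u * (φ a * β + φ b) = φ a * (u * β) + φ b * u := by ring
    rw [this, h1, hu]
    push_cast [map_sub, map_mul]
    ring
  have h3 : u * (φ c * β + φ d) = φ (a * d - b * c) := by
    have : u * (φ c * β + φ d) = φ c * (u * β) + φ d * u := by ring
    rw [this, h1, hu]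
    push_cast [map_sub, map_mul]
    ring
  have hΔne : φ (a * d - b * c) ≠ 0 := fun h => hdet (hφinj (by simpa using h))
  -- β is a root of mobius A f
  have hmroot : aeval β (mobius A f) = 0 := by
    have expand : aeval β (mobius A f) =
        ∑ i ∈ Finset.range (n + 1),
          φ (f.coeff i) * (φ a * β + φ b) ^ i * (φ c * β + φ d) ^ (n - i) := by
      rw [mobius, map_sum]
      apply Finset.sum_congr rfl
      intro i _
      simp [aeval_def, hφ]; rfl
    have key : u ^ n * aeval β (mobius A f) = φ (a * d - b * c) ^ n * aeval α f := by
      rw [expand, aeval_def, eval₂_eq_sum_range, Finset.mul_sum, Finset.mul_sum]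
      apply Finset.sum_congr rfl
      intro i hi
      have hin : i ≤ n := by simp only [Finset.mem_range] at hi; omega
      have hsplit : u ^ n = u ^ i * u ^ (n - i) := by
        rw [← pow_add]; congr 1; omega
      have hΔsplit : φ (a * d - b * c) ^ n = φ (a * d - b * c) ^ i * φ (a * d - b * c) ^ (n - i) := by
        rw [← pow_add]; congr 1; omega
      calc u ^ n * (φ (f.coeff i) * (φ a * β + φ b) ^ i * (φ c * β + φ d) ^ (n - i))
          = φ (f.coeff i) * ((u * (φ a * β + φ b)) ^ i * (u * (φ c * β + φ d)) ^ (n - i)) := by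
            rw [hsplit, mul_pow, mul_pow]; ring
        _ = φ (f.coeff i) * ((φ (a * d - b * c) * α) ^ i * φ (a * d - b * c) ^ (n - i)) := by
            rw [h2, h3]
        _ = φ (a * d - b * c) ^ n * (φ (f.coeff i) * α ^ i) := by
            rw [hΔsplit, mul_pow]; ring
    rw [hroot, mul_zero] at key
    exact (mul_eq_zero.mp key).resolve_left (pow_ne_zero n hune)
  have hβint : IsIntegral F β := IsIntegral.of_finite F β
  -- F⟮β⟯ = ⊤
  have hcdne : φ c * β + φ d ≠ 0 := by
    intro h0
    apply hΔne
    rw [← h3, h0, mul_zero]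
  have hαmem : α ∈ F⟮β⟯ := by
    have hstep : (φ c * β + φ d) * α = φ a * β + φ b := by
      apply mul_left_cancel₀ hune
      calc u * ((φ c * β + φ d) * α) = (u * (φ c * β + φ d)) * α := by ring
        _ = φ (a * d - b * c) * α := by rw [h3]
        _ = u * (φ a * β + φ b) := h2.symm
    have hαeq : α = (φ a * β + φ b) * (φ c * β + φ d)⁻¹ := by
      rw [← hstep, mul_comm (φ c * β + φ d) α, mul_assoc, mul_inv_cancel₀ hcdne, mul_one]
    have hβmem : β ∈ F⟮β⟯ := IntermediateField.mem_adjoin_simple_self F β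
    rw [hαeq]
    exact mul_mem
      (add_mem (mul_mem (IntermediateField.algebraMap_mem _ a) hβmem)
        (IntermediateField.algebraMap_mem _ b))
      (inv_mem (add_mem (mul_mem (IntermediateField.algebraMap_mem _ c) hβmem)
        (IntermediateField.algebraMap_mem _ d)))
  have htop : F⟮β⟯ = ⊤ := by
    rw [eq_top_iff]
    intro x _
    have hx : x ∈ Algebra.adjoin F {α} := by
      have h : Algebra.adjoin F {α} = (⊤ : Subalgebra F K) := AdjoinRoot.adjoinRoot_eq_top
      rw [h]; trivial
    exact Algebra.adjoin_le (Set.singleton_subset_iff.mpr hαmem) hx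
  have hminβdeg : (minpoly F β).natDegree = n := by
    rw [← IntermediateField.adjoin.finrank hβint, htop, IntermediateField.finrank_top', hfinrank]
  -- divisibility
  have hdvd : minpoly F β ∣ mobius A f := minpoly.dvd F β hmroot
  obtain ⟨g, hg⟩ := hdvd
  have hminmon : (minpoly F β).Monic := minpoly.monic hβint
  have hminne : minpoly F β ≠ 0 := hminmon.ne_zero
  have hgne : g ≠ 0 := by
    intro h0; apply hmobne; rw [hg, h0, mul_zero]
  have hgdeg : g.natDegree = 0 := by
    have := natDegree_mul hminne hgne
    rw [← hg] at this
    omega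
  obtain ⟨g0, hgC⟩ : ∃ g0, g = C g0 := ⟨g.coeff 0, eq_C_of_natDegree_eq_zero hgdeg⟩
  rw [hgC] at hg hgne
  have hg0ne : g0 ≠ 0 := by
    intro h0; apply hgne; rw [h0, map_zero]
  have hlc : (mobius A f).leadingCoeff = g0 := by
    rw [hg, leadingCoeff_mul, hminmon.leadingCoeff, one_mul, leadingCoeff_C]
  have hNeq : mobiusN A f = minpoly F β := by
    rw [mobiusN, hlc, hg, mul_assoc, ← map_mul, mul_inv_cancel₀ hg0ne, map_one, mul_one]
  refine ⟨?_, ?_, ?_⟩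
  · rw [hNeq]; exact hminmon
  · rw [hNeq]; exact minpoly.irreducible hβint
  · rw [hNeq]; exact hminβdeg
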